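/- Let X be a compact subset of ℝ and let μ be a Borel probability measure on X with full support. If f : X → ℝ is continuous, g : X → ℝ has bounded variation, and f = g μ-almost everywhere, then Var_X(f) ≤ Var_X(g); in particular f has bounded variation. -/

import Mathlib

open Set MeasureTheory
open scoped ENNReal NNReal

noncomputable section
set_option maxHeartbeats 1000000

/-- Separation constant for finitely many points. -/
lemma stmt16_sep (u : ℕ → ℝ) (n : ℕ) (δ : ℝ) (hδ : 0 < δ) :
    ∃ δ₂ : ℝ, 0 < δ₂ ∧ δ₂ ≤ δ ∧
      ∀ i j : ℕ, i ≤ n → j ≤ n → u i < u j → 3 * δ₂ ≤ u j - u i := by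
  classical
  set P : Finset (ℕ × ℕ) :=
    (Finset.range (n+1) ×ˢ Finset.range (n+1)).filter (fun p => u p.1 < u p.2) with hP
  set F : Finset ℝ := insert δ (P.image fun p => (u p.2 - u p.1) / 3) with hF
  have hFne : F.Nonempty := ⟨δ, Finset.mem_insert_self _ _⟩
  have hpos : ∀ x ∈ F, 0 < x := by
    intro x hx
    rw [hF, Finset.mem_insert] at hx
    rcases hx with rfl | hx
    · exact hδ
    · obtain ⟨p, hp, rfl⟩ := Finset.mem_image.1 hx
      rw [hP, Finset.mem_filter] at hp
      linarith [hp.2]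
  refine ⟨F.min' hFne, hpos _ (F.min'_mem hFne),
    Finset.min'_le F δ (Finset.mem_insert_self _ _), ?_⟩
  intro i j hi hj hij
  have hmem : (u j - u i) / 3 ∈ F := by
    apply Finset.mem_insert_of_mem
    exact Finset.mem_image.2 ⟨(i, j), Finset.mem_filter.2
      ⟨Finset.mem_product.2 ⟨Finset.mem_range.2 (Nat.lt_succ_of_le hi),
        Finset.mem_range.2 (Nat.lt_succ_of_le hj)⟩, hij⟩, rfl⟩
  have := Finset.min'_le F _ hmem
  linarith

/-- If `X ⊆ ℝ` is compact, `μ` is a fully supported Borel probability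
measure on `X`, `f` is continuous on `X`, `g` has bounded variation on `X`, and `f = g`
μ-a.e. on `X`, then `Var_X f ≤ Var_X g`; in particular `f` has bounded variation on `X`. -/
theorem stmt16 (X : Set ℝ) (hX : IsCompact X)
    (μ : Measure ℝ) (hprob : IsProbabilityMeasure μ) (hμX : μ X = 1)
    (hfull : ∀ U : Set ℝ, IsOpen U → (U ∩ X).Nonempty → 0 < μ (U ∩ X))
    (f g : ℝ → ℝ) (hf : ContinuousOn f X) (hg : BoundedVariationOn g X)
    (hae : ∀ᵐ x ∂(μ.restrict X), f x = g x) :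
    eVariationOn f X ≤ eVariationOn g X ∧ BoundedVariationOn f X := by
  classical
  set E : Set ℝ := {x | x ∈ X ∧ f x = g x} with hEdef
  have hEX : E ⊆ X := fun x hx => hx.1
  have hXmeas : MeasurableSet X := hX.isClosed.measurableSet
  have hnull : μ.restrict X {y | ¬ f y = g y} = 0 := by
    rw [← MeasureTheory.ae_iff] at *
    exact hae
  -- density of E in X
  have hdense : ∀ x ∈ X, ∀ r : ℝ, 0 < r → ∃ y, y ∈ E ∧ |y - x| < r := by
    intro x hx r hr
    by_contra h
    push_neg at h
    have hsub : Metric.ball x r ⊆ {y | ¬ f y = g y} ∪ Xᶜ := by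
      intro y hy
      by_cases hyX : y ∈ X
      · left
        intro heq
        have := h y ⟨hyX, heq⟩
        rw [Metric.mem_ball, Real.dist_eq] at hy
        exact absurd hy (not_lt.2 this)
      · exact Or.inr hyX
    have h1 : μ (Metric.ball x r ∩ X) = μ.restrict X (Metric.ball x r) :=
      (Measure.restrict_apply measurableSet_ball).symm
    have h2 : μ.restrict X (Metric.ball x r) ≤
        μ.restrict X {y | ¬ f y = g y} + μ.restrict X Xᶜ :=
      le_trans (measure_mono hsub) (measure_union_le _ _)
    have h3 : μ.restrict X Xᶜ = 0 := by
      rw [Measure.restrict_apply hXmeas.compl, Set.compl_inter_self]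
      exact measure_empty
    have hpos := hfull (Metric.ball x r) Metric.isOpen_ball
      ⟨x, Metric.mem_ball_self hr, hx⟩
    rw [h1] at hpos
    rw [hnull, h3, add_zero] at h2
    exact absurd (le_antisymm h2 (zero_le)) (ne_of_gt hpos)
  have key : eVariationOn f X ≤ eVariationOn g X := by
    rw [eVariationOn]
    apply iSup_le
    rintro ⟨n, u, hu, us⟩
    apply ENNReal.le_of_forall_pos_le_add
    intro ε hε hfin
    -- uniform continuity
    have huc := hX.uniformContinuousOn_of_continuous hf
    rw [Metric.uniformContinuousOn_iff] at huc
    obtain ⟨ε', hε'pos, hε'le⟩ : ∃ ε' : ℝ, 0 < ε' ∧ (n : ℝ) * (ε' + ε') ≤ (ε : ℝ) := by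
      refine ⟨(ε : ℝ) / (2 * n + 2), by positivity, ?_⟩
      rw [← add_div, ← mul_div_assoc, div_le_iff₀ (by positivity)]
      have hε0 : (0:ℝ) ≤ ε := ε.coe_nonneg
      nlinarith [Nat.cast_nonneg (α := ℝ) n]
    obtain ⟨δ, hδpos, hδf⟩ := huc ε' hε'pos
    obtain ⟨δ₂, hδ₂pos, hδ₂δ, hsep⟩ := stmt16_sep u n δ hδpos
    -- choice of nearby points of E, constant on equal values
    obtain ⟨b, hbmono, hbX, hfb, hbd⟩ : ∃ b : ℕ → ℝ, Monotone b ∧ (∀ k, b k ∈ X) ∧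
        (∀ k, f (b k) = g (b k)) ∧ ∀ k ≤ n, dist (u k) (b k) < δ := by
      have hch : ∀ x : ℝ, ∃ y, x ∈ X → y ∈ E ∧ |y - x| < δ₂ := by
        intro x
        by_cases hx : x ∈ X
        · obtain ⟨y, hy, hyd⟩ := hdense x hx δ₂ hδ₂pos
          exact ⟨y, fun _ => ⟨hy, hyd⟩⟩
        · exact ⟨0, fun h => absurd h hx⟩
      choose c hc using hch
      refine ⟨fun k => c (u (min k n)), ?_, ?_, ?_, ?_⟩
      · intro k l hkl
        have hmm : min k n ≤ min l n := min_le_min hkl le_rfl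
        have huu : u (min k n) ≤ u (min l n) := hu hmm
        dsimp only
        rcases eq_or_lt_of_le huu with heq | hlt
        · rw [heq]
        · have hs := hsep _ _ (min_le_right k n) (min_le_right l n) hlt
          have h1 := abs_lt.1 (hc _ (us (min k n))).2
          have h2 := abs_lt.1 (hc _ (us (min l n))).2
          have : c (u (min k n)) < c (u (min l n)) := by
            linarith [h1.1, h1.2, h2.1, h2.2]
          exact this.le
      · exact fun k => hEX (hc _ (us _)).1
      · exact fun k => (hc _ (us _)).1.2
      · intro k hk
        dsimp only
        have hmin : min k n = k := min_eq_left hk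
        have h5 := abs_lt.1 (hc _ (us (min k n))).2
        rw [hmin] at h5
        rw [hmin, Real.dist_eq, abs_lt]
        constructor <;> linarith [h5.1, h5.2]
    have hclose : ∀ k, k ≤ n → edist (f (u k)) (f (b k)) ≤ ENNReal.ofReal ε' := by
      intro k hk
      rw [edist_dist]
      exact ENNReal.ofReal_le_ofReal (hδf (u k) (us k) (b k) (hbX k) (hbd k hk)).le
    have hstep : ∀ i ∈ Finset.range n,
        edist (f (u (i+1))) (f (u i)) ≤
          edist (g (b (i+1))) (g (b i)) + (ENNReal.ofReal ε' + ENNReal.ofReal ε') := by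
      intro i hi
      rw [Finset.mem_range] at hi
      calc edist (f (u (i+1))) (f (u i))
          ≤ edist (f (u (i+1))) (f (b (i+1))) + edist (f (b (i+1))) (f (b i))
            + edist (f (b i)) (f (u i)) :=
            le_trans (edist_triangle _ (f (b i)) _)
              (add_le_add (edist_triangle _ (f (b (i+1))) _) le_rfl)
        _ ≤ ENNReal.ofReal ε' + edist (f (b (i+1))) (f (b i)) + ENNReal.ofReal ε' := by
            gcongr
            · exact hclose (i+1) hi
            · rw [edist_comm]; exact hclose i (Nat.le_of_lt hi)
        _ = edist (g (b (i+1))) (g (b i))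
            + (ENNReal.ofReal ε' + ENNReal.ofReal ε') := by
            rw [hfb (i+1), hfb i, add_comm (ENNReal.ofReal ε'), add_assoc]
    have hsum3 : (n : ℝ≥0∞) * (ENNReal.ofReal ε' + ENNReal.ofReal ε') ≤ (ε : ℝ≥0∞) := by
      rw [← ENNReal.ofReal_add hε'pos.le hε'pos.le,
        ← ENNReal.ofReal_natCast n, ← ENNReal.ofReal_mul (Nat.cast_nonneg n)]
      exact le_trans (ENNReal.ofReal_le_ofReal hε'le)
        (le_of_eq ENNReal.ofReal_coe_nnreal)
    calc ∑ i ∈ Finset.range n, edist (f (u (i+1))) (f (u i))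
        ≤ ∑ i ∈ Finset.range n, (edist (g (b (i+1))) (g (b i))
            + (ENNReal.ofReal ε' + ENNReal.ofReal ε')) := Finset.sum_le_sum hstep
      _ = (∑ i ∈ Finset.range n, edist (g (b (i+1))) (g (b i)))
          + n * (ENNReal.ofReal ε' + ENNReal.ofReal ε') := by
          rw [Finset.sum_add_distrib, Finset.sum_const, Finset.card_range, nsmul_eq_mul]
      _ ≤ eVariationOn g X + ε :=
          add_le_add (eVariationOn.sum_le (f := g) (n := n) hbmono hbX) hsum3
  exact ⟨key, fun h => hg (top_le_iff.1 (h ▸ key))⟩
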